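/- For all integers ω0 ≥ 2 and ω1 ≥ 2, the limit as n → ∞ of (1/n)·|{M : 2 ≤ M ≤ n, ‖M‖_∞ < ω0 and ‖M−1‖_∞ < ω1}| exists and equals the convergent infinite product ∏_{p prime} (1 − p^{−ω0} − p^{−ω1}). -/

import Mathlib

open scoped Classical
open Filter

/-- The largest exponent appearing in the prime factorization of `N`
(`0` for `N = 0, 1`). -/
noncomputable def normInf (N : ℕ) : ℕ :=
  N.factorization.support.sup fun p => N.factorization p


lemma normInf_lt_iff {M ω : ℕ} (hM : M ≠ 0) (hω : 0 < ω) :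
    normInf M < ω ↔ ∀ p : ℕ, p.Prime → ¬ p ^ ω ∣ M := by
  rw [normInf, Finset.sup_lt_iff (by exact hω)]
  constructor
  · intro h p hp hdvd
    have hle : ω ≤ M.factorization p := (Nat.Prime.pow_dvd_iff_le_factorization hp hM).mp hdvd
    have hmem : p ∈ M.factorization.support := by
      rw [Finsupp.mem_support_iff]; omega
    have := h p hmem; omega
  · intro h p hmem
    have hp : p.Prime := Nat.prime_of_mem_primeFactors (by rwa [Nat.support_factorization] at hmem)
    by_contra hlt
    exact h p hp ((Nat.Prime.pow_dvd_iff_le_factorization hp hM).mpr (by omega))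

lemma card_mod_eq {d m a : ℕ} (ha : a < d) :
    ((Finset.range (d * m)).filter (fun r => r % d = a)).card = m := by
  have key : ((Finset.range (d * m)).filter (fun r => r % d = a)).card = (Finset.range m).card := by
    apply Finset.card_nbij' (fun r => r / d) (fun i => a + d * i)
    · intro r hr
      simp only [Finset.mem_coe, Finset.mem_filter, Finset.mem_range] at hr ⊢
      exact Nat.div_lt_of_lt_mul hr.1
    · intro i hi
      simp only [Finset.mem_coe, Finset.mem_filter, Finset.mem_range] at hi ⊢
      constructor
      · calc a + d * i < d + d * i := by omega
          _ = d * (i + 1) := by ring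
          _ ≤ d * m := Nat.mul_le_mul_left d hi
      · simp [Nat.add_mul_mod_self_left, Nat.mod_eq_of_lt ha]
    · intro r hr
      simp only [Finset.mem_coe, Finset.mem_filter, Finset.mem_range] at hr
      rw [← hr.2]
      exact (Nat.mod_add_div r d)
    · intro i hi
      have : a / d = 0 := Nat.div_eq_of_lt ha
      dsimp only
      rw [Nat.add_mul_div_left _ _ (by omega : 0 < d), this, zero_add]
  simpa using key


lemma card_crt {Q1 Q2 : ℕ} (h : Nat.Coprime Q1 Q2) (h1 : 0 < Q1) (h2 : 0 < Q2)
    (c1 c2 : ℕ → Prop) [DecidablePred c1] [DecidablePred c2] :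
    ((Finset.range (Q1 * Q2)).filter (fun r => c1 (r % Q1) ∧ c2 (r % Q2))).card
      = ((Finset.range Q1).filter (fun r => c1 r)).card *
        ((Finset.range Q2).filter (fun r => c2 r)).card := by
  rw [← Finset.card_product]
  apply Finset.card_nbij' (fun r => (r % Q1, r % Q2))
    (fun ab => (Nat.chineseRemainder h ab.1 ab.2 : ℕ) % (Q1 * Q2))
  · intro r hr
    simp only [Finset.mem_coe, Finset.mem_filter, Finset.mem_range, Finset.mem_product] at hr ⊢
    exact ⟨⟨Nat.mod_lt _ h1, hr.2.1⟩, ⟨Nat.mod_lt _ h2, hr.2.2⟩⟩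
  · intro ab hab
    simp only [Finset.mem_coe, Finset.mem_filter, Finset.mem_range, Finset.mem_product] at hab ⊢
    set x := (Nat.chineseRemainder h ab.1 ab.2 : ℕ) with hx
    have hx1 : x % Q1 = ab.1 % Q1 := (Nat.chineseRemainder h ab.1 ab.2).2.1
    have hx2 : x % Q2 = ab.2 % Q2 := (Nat.chineseRemainder h ab.1 ab.2).2.2
    have e1 : x % (Q1 * Q2) % Q1 = ab.1 := by
      rw [Nat.mod_mod_of_dvd _ (dvd_mul_right Q1 Q2), hx1, Nat.mod_eq_of_lt hab.1.1]
    have e2 : x % (Q1 * Q2) % Q2 = ab.2 := by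
      rw [Nat.mod_mod_of_dvd _ (dvd_mul_left Q2 Q1), hx2, Nat.mod_eq_of_lt hab.2.1]
    exact ⟨Nat.mod_lt _ (Nat.mul_pos h1 h2), by rw [e1]; exact hab.1.2,
      by rw [e2]; exact hab.2.2⟩
  · intro r hr
    simp only [Finset.mem_coe, Finset.mem_filter, Finset.mem_range] at hr
    set x := (Nat.chineseRemainder h (r % Q1) (r % Q2) : ℕ) with hx
    have hx1 : x ≡ r % Q1 [MOD Q1] := (Nat.chineseRemainder h (r % Q1) (r % Q2)).2.1
    have hx2 : x ≡ r % Q2 [MOD Q2] := (Nat.chineseRemainder h (r % Q1) (r % Q2)).2.2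
    have m1 : x ≡ r [MOD Q1] := hx1.trans (Nat.mod_modEq r Q1)
    have m2 : x ≡ r [MOD Q2] := hx2.trans (Nat.mod_modEq r Q2)
    have : x ≡ r [MOD Q1 * Q2] := (Nat.modEq_and_modEq_iff_modEq_mul h).mp ⟨m1, m2⟩
    have := this.symm
    unfold Nat.ModEq at this
    rw [Nat.mod_eq_of_lt hr.1] at this
    exact this.symm
  · intro ab hab
    simp only [Finset.mem_coe, Finset.mem_filter, Finset.mem_range, Finset.mem_product] at hab
    set x := (Nat.chineseRemainder h ab.1 ab.2 : ℕ) with hx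
    have hx1 : x % Q1 = ab.1 % Q1 := (Nat.chineseRemainder h ab.1 ab.2).2.1
    have hx2 : x % Q2 = ab.2 % Q2 := (Nat.chineseRemainder h ab.1 ab.2).2.2
    have e1 : x % (Q1 * Q2) % Q1 = ab.1 := by
      rw [Nat.mod_mod_of_dvd _ (dvd_mul_right Q1 Q2), hx1, Nat.mod_eq_of_lt hab.1.1]
    have e2 : x % (Q1 * Q2) % Q2 = ab.2 := by
      rw [Nat.mod_mod_of_dvd _ (dvd_mul_left Q2 Q1), hx2, Nat.mod_eq_of_lt hab.2.1]
    exact Prod.ext e1 e2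

lemma card_crt_prod (q : ℕ → ℕ) (c : ℕ → ℕ → Prop) [∀ p, DecidablePred (c p)]
    (P : Finset ℕ) (hq : ∀ p ∈ P, 0 < q p)
    (hco : ∀ p ∈ P, ∀ r ∈ P, p ≠ r → Nat.Coprime (q p) (q r)) :
    ((Finset.range (∏ p ∈ P, q p)).filter (fun r => ∀ p ∈ P, c p (r % q p))).card
      = ∏ p ∈ P, ((Finset.range (q p)).filter (fun r => c p r)).card := by
  induction P using Finset.induction_on with
  | empty => simp
  | @insert a s ha ih =>
    have hqa : 0 < q a := hq a (Finset.mem_insert_self a s)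
    have hqs : 0 < ∏ p ∈ s, q p :=
      Finset.prod_pos (fun p hp => hq p (Finset.mem_insert_of_mem hp))
    have hcop : Nat.Coprime (q a) (∏ p ∈ s, q p) := by
      apply Nat.Coprime.prod_right
      intro r hr
      exact hco a (Finset.mem_insert_self a s) r (Finset.mem_insert_of_mem hr)
        (by rintro rfl; exact ha hr)
    rw [Finset.prod_insert ha, Finset.prod_insert ha]
    have key := card_crt hcop hqa hqs (c a)
      (fun t => ∀ p ∈ s, c p (t % q p))
    rw [← ih (fun p hp => hq p (Finset.mem_insert_of_mem hp))
        (fun p hp r hr => hco p (Finset.mem_insert_of_mem hp) r (Finset.mem_insert_of_mem hr)),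
      ← key]
    congr 1
    apply Finset.filter_congr
    intro r _
    simp only [Finset.mem_insert, forall_eq_or_imp]
    constructor
    · rintro ⟨h1, h2⟩
      exact ⟨h1, fun p hp => by
        rw [Nat.mod_mod_of_dvd r (Finset.dvd_prod_of_mem q hp)]; exact h2 p hp⟩
    · rintro ⟨h1, h2⟩
      refine ⟨h1, fun p hp => ?_⟩
      have := h2 p hp
      rwa [Nat.mod_mod_of_dvd r (Finset.dvd_prod_of_mem q hp)] at this


lemma filter_blocks {Q : ℕ} (c : ℕ → Prop) [DecidablePred c]
    (hc : ∀ M, c M ↔ c (M % Q)) (K : ℕ) :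
    ((Finset.range (K * Q)).filter c).card = K * ((Finset.range Q).filter c).card := by
  induction K with
  | zero => simp
  | succ K ih =>
    have h1 : (K + 1) * Q = K * Q + Q := by ring
    rw [h1, Finset.range_add_eq_union, Finset.filter_union,
      Finset.card_union_of_disjoint, ih, Finset.filter_map, Finset.card_map]
    · have : ((Finset.range Q).filter (c ∘ (addLeftEmbedding (K * Q)))).card
          = ((Finset.range Q).filter c).card := by
        congr 1
        apply Finset.filter_congr
        intro i hi
        simp only [Finset.mem_range] at hi
        have e1 : (K * Q + i) % Q = i := by
          rw [add_comm, Nat.add_mul_mod_self_right, Nat.mod_eq_of_lt hi]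
        simp only [Function.comp, addLeftEmbedding_apply]
        rw [hc (K * Q + i), e1, hc i, Nat.mod_eq_of_lt hi]
      rw [this]
      ring
    · rw [Finset.disjoint_left]
      intro x hx hx2
      simp only [Finset.mem_filter, Finset.mem_range, Finset.mem_map,
        addLeftEmbedding_apply] at hx hx2
      obtain ⟨⟨i, hi, rfl⟩, -⟩ := hx2
      omega

lemma count_estimate {Q : ℕ} (hQ : 0 < Q) (c : ℕ → Prop) [DecidablePred c]
    (hc : ∀ M, c M ↔ c (M % Q)) (n : ℕ) :
    |(((Finset.Icc 2 n).filter c).card : ℝ)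
      - (((Finset.range Q).filter c).card : ℝ) / Q * n| ≤ Q + 3 := by
  set R := ((Finset.range Q).filter c).card with hR
  have hRQ : R ≤ Q := by
    calc R ≤ (Finset.range Q).card := Finset.card_filter_le _ _
    _ = Q := Finset.card_range Q
  set K := (n + 1) / Q with hK
  set B := ((Finset.range (n + 1)).filter c).card with hB
  -- bounds on B
  have hlow : K * R ≤ B := by
    have hsub : Finset.range (K * Q) ⊆ Finset.range (n + 1) :=
      Finset.range_subset_range.mpr (Nat.div_mul_le_self _ _)
    calc K * R = ((Finset.range (K * Q)).filter c).card := (filter_blocks c hc K).symm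
      _ ≤ B := Finset.card_le_card (Finset.filter_subset_filter c hsub)
  have hK2 : n + 1 < (K + 1) * Q := by
    have hmd : (n + 1) % Q + Q * K = n + 1 := Nat.mod_add_div (n+1) Q
    have hml : (n + 1) % Q < Q := Nat.mod_lt _ hQ
    calc n + 1 = (n + 1) % Q + Q * K := hmd.symm
      _ < Q + Q * K := by omega
      _ = (K + 1) * Q := by ring
  have hhigh : B ≤ (K + 1) * R := by
    have hsub : Finset.range (n + 1) ⊆ Finset.range ((K + 1) * Q) :=
      Finset.range_subset_range.mpr hK2.le
    calc B ≤ ((Finset.range ((K + 1) * Q)).filter c).card :=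
        Finset.card_le_card (Finset.filter_subset_filter c hsub)
      _ = (K + 1) * R := filter_blocks c hc (K + 1)
  -- A vs B
  set A := ((Finset.Icc 2 n).filter c).card with hA
  have hAB : A ≤ B ∧ B ≤ A + 2 := by
    constructor
    · apply Finset.card_le_card
      apply Finset.filter_subset_filter
      intro x hx
      simp only [Finset.mem_Icc] at hx
      simp only [Finset.mem_range]; omega
    · have : (Finset.range (n+1)).filter c ⊆ insert 0 (insert 1 ((Finset.Icc 2 n).filter c)) := by
        intro x hx
        simp only [Finset.mem_filter, Finset.mem_range] at hx
        simp only [Finset.mem_insert, Finset.mem_filter, Finset.mem_Icc]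
        rcases Nat.lt_or_ge x 2 with h | h
        · omega
        · right; right; exact ⟨⟨h, by omega⟩, hx.2⟩
      calc B ≤ (insert 0 (insert 1 ((Finset.Icc 2 n).filter c))).card := Finset.card_le_card this
        _ ≤ (insert 1 ((Finset.Icc 2 n).filter c)).card + 1 := Finset.card_insert_le _ _
        _ ≤ A + 1 + 1 := by
            have := Finset.card_insert_le 1 ((Finset.Icc 2 n).filter c); omega
        _ = A + 2 := by omega
  -- K bounds in ℕ : K*Q ≤ n+1 < (K+1)*Q
  have hK1 : K * Q ≤ n + 1 := Nat.div_mul_le_self _ _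
  -- now real arithmetic
  have hQR : (0:ℝ) < Q := by exact_mod_cast hQ
  have hRQr : (R:ℝ) ≤ Q := by exact_mod_cast hRQ
  have hRr : (0:ℝ) ≤ R := Nat.cast_nonneg R
  have h1c : (A:ℝ) ≤ ((K:ℝ) + 1) * R := by
    have : A ≤ (K + 1) * R := le_trans hAB.1 hhigh
    exact_mod_cast this
  have h2c : (K:ℝ) * R ≤ (A:ℝ) + 2 := by
    have : K * R ≤ A + 2 := le_trans hlow hAB.2
    exact_mod_cast this
  have hK1r : (K:ℝ) * Q ≤ (n:ℝ) + 1 := by exact_mod_cast hK1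
  have hK2r : (n:ℝ) + 1 < ((K:ℝ) + 1) * Q := by exact_mod_cast hK2
  rw [abs_le]
  constructor
  · rw [neg_le_sub_iff_le_add, div_mul_eq_mul_div, div_le_iff₀ hQR]
    nlinarith [mul_le_mul_of_nonneg_right hK2r.le hRr,
      mul_le_mul_of_nonneg_right h2c hQR.le,
      mul_le_mul_of_nonneg_right hRQr hQR.le, Nat.cast_nonneg (α := ℝ) A]
  · rw [sub_le_iff_le_add, div_mul_eq_mul_div]
    rw [← sub_le_iff_le_add', le_div_iff₀ hQR]
    nlinarith [mul_le_mul_of_nonneg_right h1c hQR.le,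
      mul_le_mul_of_nonneg_right hK1r hRr,
      mul_le_mul_of_nonneg_right hRQr hQR.le, Nat.cast_nonneg (α := ℝ) A]


lemma mod_eq_one_iff {M t : ℕ} (hM : 1 ≤ M) (ht : 2 ≤ t) : M % t = 1 ↔ t ∣ (M - 1) := by
  constructor
  · intro h
    have hmd := Nat.mod_add_div M t
    exact ⟨M / t, by omega⟩
  · rintro ⟨k, hk⟩
    have hMe : M = t * k + 1 := by omega
    rw [hMe, Nat.mul_add_mod, Nat.mod_eq_of_lt (by omega : 1 < t)]

lemma prime_residue_count {p ω0 ω1 : ℕ} (hp : p.Prime) (h0 : 1 ≤ ω0) (h1 : 1 ≤ ω1) :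
    ((Finset.range (p ^ (ω0 + ω1))).filter
      (fun t => ¬ t % p ^ ω0 = 0 ∧ ¬ t % p ^ ω1 = 1)).card
      = p ^ (ω0 + ω1) - p ^ ω1 - p ^ ω0 := by
  have hq : p ^ (ω0 + ω1) = p ^ ω0 * p ^ ω1 := pow_add p ω0 ω1
  have h2 : 2 ≤ p := hp.two_le
  have hp0 : 2 ≤ p ^ ω0 := le_trans (by omega) (Nat.le_self_pow (by omega) p)
  have hp1 : 2 ≤ p ^ ω1 := le_trans (by omega) (Nat.le_self_pow (by omega) p)
  set A := (Finset.range (p ^ (ω0 + ω1))).filter (fun t => t % p ^ ω0 = 0) with hA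
  set B := (Finset.range (p ^ (ω0 + ω1))).filter (fun t => t % p ^ ω1 = 1) with hB
  have hcardA : A.card = p ^ ω1 := by
    rw [hA, hq]; exact card_mod_eq (by omega)
  have hcardB : B.card = p ^ ω0 := by
    rw [hB, hq, mul_comm]; exact card_mod_eq (by omega)
  have hdisj : Disjoint A B := by
    rw [Finset.disjoint_left]
    intro t htA htB
    simp only [hA, hB, Finset.mem_filter] at htA htB
    have e0 : t % p = 0 := by
      rw [← Nat.mod_mod_of_dvd t (dvd_pow_self p (by omega : ω0 ≠ 0)), htA.2, Nat.zero_mod]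
    have e1 : t % p = 1 := by
      rw [← Nat.mod_mod_of_dvd t (dvd_pow_self p (by omega : ω1 ≠ 0)), htB.2,
        Nat.mod_eq_of_lt (by omega : 1 < p)]
    omega
  have hset : (Finset.range (p ^ (ω0 + ω1))).filter
      (fun t => ¬ t % p ^ ω0 = 0 ∧ ¬ t % p ^ ω1 = 1)
      = Finset.range (p ^ (ω0 + ω1)) \ (A ∪ B) := by
    ext t
    simp only [Finset.mem_filter, Finset.mem_sdiff, Finset.mem_union, hA, hB]
    tauto
  rw [hset, Finset.card_sdiff_of_subset (by
      intro t ht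
      simp only [Finset.mem_union, hA, hB, Finset.mem_filter] at ht
      rcases ht with h | h <;> exact h.1),
    Finset.card_union_of_disjoint hdisj, hcardA, hcardB, Finset.card_range, Nat.sub_add_eq]

lemma residue_density {p ω0 ω1 : ℕ} (hp : p.Prime) (h0 : 1 ≤ ω0) (h1 : 1 ≤ ω1) :
    ((p ^ (ω0 + ω1) - p ^ ω1 - p ^ ω0 : ℕ) : ℝ) / ((p ^ (ω0 + ω1) : ℕ) : ℝ)
      = 1 - 1 / (p : ℝ) ^ ω0 - 1 / (p : ℝ) ^ ω1 := by
  have h2 : 2 ≤ p := hp.two_le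
  have hp0 : 2 ≤ p ^ ω0 := le_trans (by omega) (Nat.le_self_pow (by omega) p)
  have hp1 : 2 ≤ p ^ ω1 := le_trans (by omega) (Nat.le_self_pow (by omega) p)
  have hq : p ^ (ω0 + ω1) = p ^ ω0 * p ^ ω1 := pow_add p ω0 ω1
  have hle : p ^ ω1 + p ^ ω0 ≤ p ^ (ω0 + ω1) := by
    rw [hq]; nlinarith
  have hcast : ((p ^ (ω0 + ω1) - p ^ ω1 - p ^ ω0 : ℕ) : ℝ)
      = ((p:ℝ) ^ ω0 * (p:ℝ) ^ ω1 - (p:ℝ) ^ ω1 - (p:ℝ) ^ ω0) := by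
    rw [Nat.sub_sub, Nat.cast_sub (by omega), hq]
    push_cast
    ring
  have hp0r : (0:ℝ) < (p:ℝ) ^ ω0 := by positivity
  have hp1r : (0:ℝ) < (p:ℝ) ^ ω1 := by positivity
  rw [hcast, hq]
  push_cast
  field_simp

section
variable (ω0 ω1 : ℕ)

noncomputable def Pz (z : ℕ) : Finset ℕ := (Finset.range (z + 1)).filter Nat.Prime

noncomputable def Qz (z : ℕ) : ℕ := ∏ p ∈ Pz z, p ^ (ω0 + ω1)

def cz (z M : ℕ) : Prop := ∀ p ∈ Pz z, ¬ M % p ^ ω0 = 0 ∧ ¬ M % p ^ ω1 = 1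

lemma Qz_pos : 0 < Qz ω0 ω1 z :=
  Finset.prod_pos fun p hp =>
    pow_pos (Nat.Prime.pos (Finset.mem_filter.mp hp).2) _

lemma dvd_Qz {p : ℕ} (hp : p ∈ Pz z) (i : ℕ) (hi : i ≤ ω0 + ω1) :
    p ^ i ∣ Qz ω0 ω1 z :=
  dvd_trans (pow_dvd_pow p hi) (Finset.dvd_prod_of_mem _ hp)

lemma cz_periodic (z M : ℕ) : cz ω0 ω1 z M ↔ cz ω0 ω1 z (M % Qz ω0 ω1 z) := by
  unfold cz
  apply forall_congr'
  intro p
  apply imp_congr_right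
  intro hp
  have e0 : M % Qz ω0 ω1 z % p ^ ω0 = M % p ^ ω0 :=
    Nat.mod_mod_of_dvd M (dvd_Qz ω0 ω1 hp ω0 (by omega))
  have e1 : M % Qz ω0 ω1 z % p ^ ω1 = M % p ^ ω1 :=
    Nat.mod_mod_of_dvd M (dvd_Qz ω0 ω1 hp ω1 (by omega))
  rw [e0, e1]

lemma Rz_card (h0 : 1 ≤ ω0) (h1 : 1 ≤ ω1) (z : ℕ) :
    ((Finset.range (Qz ω0 ω1 z)).filter (cz ω0 ω1 z)).card
      = ∏ p ∈ Pz z, (p ^ (ω0 + ω1) - p ^ ω1 - p ^ ω0) := by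
  have hstep : ((Finset.range (Qz ω0 ω1 z)).filter (cz ω0 ω1 z)).card
      = ((Finset.range (∏ p ∈ Pz z, p ^ (ω0 + ω1))).filter
          (fun r => ∀ p ∈ Pz z, ¬ (r % p ^ (ω0 + ω1)) % p ^ ω0 = 0
            ∧ ¬ (r % p ^ (ω0 + ω1)) % p ^ ω1 = 1)).card := by
    congr 1
    apply Finset.filter_congr
    intro r _
    unfold cz
    apply forall_congr'
    intro p
    apply imp_congr_right
    intro hp
    rw [Nat.mod_mod_of_dvd r (pow_dvd_pow p (by omega : ω0 ≤ ω0 + ω1)),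
      Nat.mod_mod_of_dvd r (pow_dvd_pow p (by omega : ω1 ≤ ω0 + ω1))]
  rw [hstep, card_crt_prod (fun p => p ^ (ω0 + ω1))
      (fun p t => ¬ t % p ^ ω0 = 0 ∧ ¬ t % p ^ ω1 = 1) (Pz z)
      (fun p hp => pow_pos (Nat.Prime.pos (Finset.mem_filter.mp hp).2) _)
      (fun p hp r hr hne => Nat.Coprime.pow _ _
        ((Nat.coprime_primes (Finset.mem_filter.mp hp).2 (Finset.mem_filter.mp hr).2).mpr hne))]
  exact Finset.prod_congr rfl fun p hp =>
    prime_residue_count (Finset.mem_filter.mp hp).2 h0 h1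

noncomputable def Dz (z : ℕ) : ℝ :=
  ∏ p ∈ Pz z, (1 - 1 / (p : ℝ) ^ ω0 - 1 / (p : ℝ) ^ ω1)

lemma Rz_div_Qz (h0 : 1 ≤ ω0) (h1 : 1 ≤ ω1) (z : ℕ) :
    (((Finset.range (Qz ω0 ω1 z)).filter (cz ω0 ω1 z)).card : ℝ) / (Qz ω0 ω1 z : ℝ)
      = Dz ω0 ω1 z := by
  rw [Rz_card ω0 ω1 h0 h1 z]
  unfold Qz Dz
  rw [Nat.cast_prod, Nat.cast_prod, ← Finset.prod_div_distrib]
  exact Finset.prod_congr rfl fun p hp =>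
    residue_density (Finset.mem_filter.mp hp).2 h0 h1
end


lemma multipliable_aux (ω0 ω1 : ℕ) (h0 : 2 ≤ ω0) (h1 : 2 ≤ ω1) :
    Multipliable (fun p : Nat.Primes =>
      (1 : ℝ) - 1 / ((p : ℕ) : ℝ) ^ ω0 - 1 / ((p : ℕ) : ℝ) ^ ω1) := by
  have key : ∀ p : Nat.Primes,
      (0 < (1 : ℝ) - 1 / ((p : ℕ) : ℝ) ^ ω0 - 1 / ((p : ℕ) : ℝ) ^ ω1) ∧
      |Real.log ((1 : ℝ) - 1 / ((p : ℕ) : ℝ) ^ ω0 - 1 / ((p : ℕ) : ℝ) ^ ω1)|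
        ≤ 4 * (1 / ((p:ℕ):ℝ) ^ 2) := by
    intro p
    set a := 1 / ((p:ℕ):ℝ) ^ ω0 with ha
    set b := 1 / ((p:ℕ):ℝ) ^ ω1 with hb
    have h2 : (2:ℝ) ≤ ((p:ℕ):ℝ) := by exact_mod_cast p.2.two_le
    have h1p : (1:ℝ) ≤ ((p:ℕ):ℝ) := by linarith
    have hsq : (4:ℝ) ≤ ((p:ℕ):ℝ) ^ 2 := by nlinarith
    have hsqpos : (0:ℝ) < ((p:ℕ):ℝ) ^ 2 := by positivity
    have hw0 : ((p:ℕ):ℝ) ^ 2 ≤ ((p:ℕ):ℝ) ^ ω0 := pow_le_pow_right₀ h1p h0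
    have hw1 : ((p:ℕ):ℝ) ^ 2 ≤ ((p:ℕ):ℝ) ^ ω1 := pow_le_pow_right₀ h1p h1
    have hw0p : (0:ℝ) < ((p:ℕ):ℝ) ^ ω0 := by positivity
    have hw1p : (0:ℝ) < ((p:ℕ):ℝ) ^ ω1 := by positivity
    have ea : a ≤ 1 / ((p:ℕ):ℝ) ^ 2 := one_div_le_one_div_of_le hsqpos hw0
    have eb : b ≤ 1 / ((p:ℕ):ℝ) ^ 2 := one_div_le_one_div_of_le hsqpos hw1
    have e2 : 1 / ((p:ℕ):ℝ) ^ 2 ≤ 1 / 4 := one_div_le_one_div_of_le (by norm_num) hsq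
    have hapos : 0 < a := by positivity
    have hbpos : 0 < b := by positivity
    set y := (1:ℝ) - a - b with hy
    have hy2 : (1:ℝ)/2 ≤ y := by simp only [hy]; linarith
    have hypos : (0:ℝ) < y := by linarith
    have hyle : y ≤ 1 := by simp only [hy]; linarith
    refine ⟨hypos, ?_⟩
    have hlogle : Real.log y ≤ 0 := Real.log_nonpos hypos.le hyle
    rw [abs_of_nonpos hlogle]
    have hinv : Real.log y⁻¹ ≤ y⁻¹ - 1 :=
      Real.log_le_sub_one_of_pos (inv_pos.mpr hypos)
    rw [Real.log_inv] at hinv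
    have hyinv : y⁻¹ ≤ 2 := by
      rw [inv_le_comm₀ hypos (by norm_num)]
      linarith
    have hfrac : y⁻¹ - 1 = (1 - y) * y⁻¹ := by
      field_simp
    have hone_sub : (1:ℝ) - y = a + b := by simp only [hy]; ring
    have : -Real.log y ≤ (a + b) * y⁻¹ := by
      rw [← hone_sub, ← hfrac]; exact hinv
    calc -Real.log y ≤ (a + b) * y⁻¹ := this
      _ ≤ (a + b) * 2 := by
          apply mul_le_mul_of_nonneg_left hyinv (by linarith)
      _ ≤ (2 * (1 / ((p:ℕ):ℝ) ^ 2)) * 2 := by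
          apply mul_le_mul_of_nonneg_right _ (by norm_num)
          linarith
      _ = 4 * (1 / ((p:ℕ):ℝ) ^ 2) := by ring
  have hsummaj : Summable (fun p : Nat.Primes => 4 * (1 / ((p:ℕ):ℝ) ^ 2)) := by
    have h4 : Summable (fun n : ℕ => 4 * (1 / (n:ℝ) ^ 2)) :=
      (Real.summable_one_div_nat_pow.mpr (by norm_num)).mul_left 4
    exact h4.comp_injective Subtype.coe_injective
  have hsumlog : Summable (fun p : Nat.Primes =>
      Real.log ((1 : ℝ) - 1 / ((p : ℕ) : ℝ) ^ ω0 - 1 / ((p : ℕ) : ℝ) ^ ω1)) := by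
    apply Summable.of_norm_bounded hsummaj
    intro p
    rw [Real.norm_eq_abs]
    exact (key p).2
  exact Real.multipliable_of_summable_log (fun p => (key p).1) hsumlog

lemma tendsto_Az (ω0 ω1 : ℕ) (h0 : 1 ≤ ω0) (h1 : 1 ≤ ω1) (z : ℕ) :
    Tendsto (fun n : ℕ => (((Finset.Icc 2 n).filter (cz ω0 ω1 z)).card : ℝ) / n)
      atTop (nhds (Dz ω0 ω1 z)) := by
  set Q := Qz ω0 ω1 z with hQdef
  have hQ : 0 < Q := Qz_pos ω0 ω1
  have hQr : (0:ℝ) < Q := by exact_mod_cast hQ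
  have hbound := fun n => count_estimate hQ (cz ω0 ω1 z)
    (fun M => cz_periodic ω0 ω1 z M) n
  have hDz := Rz_div_Qz ω0 ω1 h0 h1 z
  rw [tendsto_iff_dist_tendsto_zero]
  apply squeeze_zero_norm' ?_ (tendsto_const_div_atTop_nhds_zero_nat ((Q:ℝ) + 3))
  filter_upwards [eventually_ge_atTop 1] with n hn
  have hn0 : (0:ℝ) < n := by exact_mod_cast hn
  rw [Real.norm_eq_abs, Real.dist_eq, abs_abs]
  have hb := hbound n
  rw [← hQdef] at hDz
  rw [hDz] at hb
  have hb2 : |(((Finset.Icc 2 n).filter (cz ω0 ω1 z)).card : ℝ) - Dz ω0 ω1 z * n| ≤ Q + 3 := hb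
  have heq : (((Finset.Icc 2 n).filter (cz ω0 ω1 z)).card : ℝ) / n - Dz ω0 ω1 z
      = ((((Finset.Icc 2 n).filter (cz ω0 ω1 z)).card : ℝ) - Dz ω0 ω1 z * n) / n := by
    field_simp
  rw [heq, abs_div, abs_of_pos hn0]
  exact div_le_div_of_nonneg_right hb2 hn0.le

lemma tendsto_Dz (ω0 ω1 : ℕ) (h0 : 2 ≤ ω0) (h1 : 2 ≤ ω1) :
    Tendsto (fun z : ℕ => Dz ω0 ω1 z) atTop
      (nhds (∏' p : Nat.Primes,
        ((1 : ℝ) - 1 / ((p : ℕ) : ℝ) ^ ω0 - 1 / ((p : ℕ) : ℝ) ^ ω1))) := by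
  have hmult := multipliable_aux ω0 ω1 h0 h1
  have hhp := hmult.hasProd
  set Fz : ℕ → Finset Nat.Primes := fun z => (Finset.range (z + 1)).subtype Nat.Prime with hFz
  have hmono : Monotone Fz := by
    intro z z' hz p hp
    have hp' : (p : ℕ) ∈ Finset.range (z + 1) := Finset.mem_subtype.mp hp
    apply Finset.mem_subtype.mpr
    rw [Finset.mem_range] at hp' ⊢
    omega
  have hexh : ∀ p : Nat.Primes, ∃ z, p ∈ Fz z := by
    intro p
    refine ⟨(p : ℕ), Finset.mem_subtype.mpr ?_⟩
    rw [Finset.mem_range]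
    omega
  have htendF : Tendsto Fz atTop atTop := tendsto_atTop_finset_of_monotone hmono hexh
  have hcomp := hhp.comp htendF
  apply hcomp.congr
  intro z
  show ∏ p ∈ Fz z, ((1 : ℝ) - 1 / ((p : ℕ) : ℝ) ^ ω0 - 1 / ((p : ℕ) : ℝ) ^ ω1) = Dz ω0 ω1 z
  unfold Dz Pz
  exact Finset.prod_subtype_eq_prod_filter
    (fun p : ℕ => (1 : ℝ) - 1 / (p : ℝ) ^ ω0 - 1 / (p : ℝ) ^ ω1) (p := Nat.Prime)

lemma sandwich (ω0 ω1 : ℕ) (h0 : 2 ≤ ω0) (h1 : 2 ≤ ω1) (z n : ℕ) (hz : 1 ≤ z) :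
    (((Finset.Icc 2 n).filter
        (fun M => normInf M < ω0 ∧ normInf (M - 1) < ω1)).card : ℝ)
      ≤ (((Finset.Icc 2 n).filter (cz ω0 ω1 z)).card : ℝ)
    ∧ (((Finset.Icc 2 n).filter (cz ω0 ω1 z)).card : ℝ)
      ≤ (((Finset.Icc 2 n).filter
          (fun M => normInf M < ω0 ∧ normInf (M - 1) < ω1)).card : ℝ) + 2 * n / z := by
  set S := (Finset.Icc 2 n).filter
    (fun M => normInf M < ω0 ∧ normInf (M - 1) < ω1) with hS
  set Sz := (Finset.Icc 2 n).filter (cz ω0 ω1 z) with hSz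
  have hsub : S ⊆ Sz := by
    intro M hM
    simp only [hS, hSz, Finset.mem_filter, Finset.mem_Icc] at hM ⊢
    obtain ⟨⟨h2M, hMn⟩, hcond⟩ := hM
    refine ⟨⟨h2M, hMn⟩, ?_⟩
    intro p hp
    have hpP : p.Prime := (Finset.mem_filter.mp hp).2
    have hM0 : M ≠ 0 := by omega
    have hM10 : M - 1 ≠ 0 := by omega
    constructor
    · intro hmod
      have hdvd : p ^ ω0 ∣ M := Nat.dvd_of_mod_eq_zero hmod
      exact ((normInf_lt_iff hM0 (by omega)).mp hcond.1) p hpP hdvd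
    · intro hmod
      have hple : 2 ≤ p ^ ω1 :=
        le_trans hpP.two_le (Nat.le_self_pow (by omega) p)
      have hdvd : p ^ ω1 ∣ (M - 1) := (mod_eq_one_iff (by omega) hple).mp hmod
      exact ((normInf_lt_iff hM10 (by omega)).mp hcond.2) p hpP hdvd
  constructor
  · exact_mod_cast Nat.cast_le.mpr (Finset.card_le_card hsub)
  -- second inequality
  have hcards : Sz.card = S.card + (Sz \ S).card := by
    have := Finset.card_sdiff_add_card_eq_card hsub
    omega
  set PP := (Finset.Ioc z n).filter Nat.Prime with hPP
  set bad : ℕ → Finset ℕ := fun p =>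
    ((Finset.Ioc 0 n).filter (fun m => p ^ 2 ∣ m)) ∪
      (((Finset.Ioc 0 n).filter (fun m => p ^ 2 ∣ m)).image (· + 1)) with hbad
  have hsubT : Sz \ S ⊆ PP.biUnion bad := by
    intro M hM
    simp only [Finset.mem_sdiff, hS, hSz, Finset.mem_filter, Finset.mem_Icc] at hM
    obtain ⟨⟨⟨h2M, hMn⟩, hcz⟩, hnotS⟩ := hM
    have hnc : ¬ (normInf M < ω0 ∧ normInf (M - 1) < ω1) := fun h => hnotS ⟨⟨h2M, hMn⟩, h⟩
    have hM0 : M ≠ 0 := by omega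
    have hM10 : M - 1 ≠ 0 := by omega
    rw [not_and_or] at hnc
    have hPmem : ∀ p : ℕ, p.Prime → p ≤ z → p ∈ Pz z := by
      intro p hp hpz
      simp only [Pz, Finset.mem_filter, Finset.mem_range]
      exact ⟨by omega, hp⟩
    rw [Finset.mem_biUnion]
    rcases hnc with hnc | hnc
    · rw [normInf_lt_iff hM0 (by omega)] at hnc
      push_neg at hnc
      obtain ⟨p, hp, hdvd⟩ := hnc
      have hpz : z < p := by
        by_contra hle
        push_neg at hle
        obtain ⟨k, hk⟩ := hdvd
        exact (hcz p (hPmem p hp hle)).1 (by rw [hk, Nat.mul_mod_right])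
      have hpn : p ≤ n := by
        have h1 : p ≤ p ^ ω0 := Nat.le_self_pow (by omega) p
        have h2 : p ^ ω0 ≤ M := Nat.le_of_dvd (by omega) hdvd
        omega
      refine ⟨p, by simp only [hPP, Finset.mem_filter, Finset.mem_Ioc]; exact ⟨⟨hpz, hpn⟩, hp⟩, ?_⟩
      simp only [hbad, Finset.mem_union, Finset.mem_filter, Finset.mem_Ioc]
      left
      exact ⟨⟨by omega, hMn⟩, dvd_trans (pow_dvd_pow p (by omega : 2 ≤ ω0)) hdvd⟩
    · rw [normInf_lt_iff hM10 (by omega)] at hnc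
      push_neg at hnc
      obtain ⟨p, hp, hdvd⟩ := hnc
      have hple : 2 ≤ p ^ ω1 :=
        le_trans hp.two_le (Nat.le_self_pow (by omega) p)
      have hpz : z < p := by
        by_contra hle
        push_neg at hle
        exact (hcz p (hPmem p hp hle)).2 ((mod_eq_one_iff (by omega) hple).mpr hdvd)
      have hpn : p ≤ n := by
        have h1 : p ≤ p ^ ω1 := Nat.le_self_pow (by omega) p
        have h2 : p ^ ω1 ≤ M - 1 := Nat.le_of_dvd (by omega) hdvd
        omega
      refine ⟨p, by simp only [hPP, Finset.mem_filter, Finset.mem_Ioc]; exact ⟨⟨hpz, hpn⟩, hp⟩, ?_⟩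
      simp only [hbad, Finset.mem_union, Finset.mem_filter, Finset.mem_Ioc, Finset.mem_image]
      right
      refine ⟨M - 1, ⟨⟨by omega, by omega⟩, dvd_trans (pow_dvd_pow p (by omega : 2 ≤ ω1)) hdvd⟩, by omega⟩
  have hcardbad : ∀ p ∈ PP, (bad p).card ≤ 2 * (n / p ^ 2) := by
    intro p _
    have h1 : ((Finset.Ioc 0 n).filter (fun m => p ^ 2 ∣ m)).card = n / p ^ 2 :=
      Nat.Ioc_filter_dvd_card_eq_div n (p ^ 2)
    calc (bad p).card
        ≤ ((Finset.Ioc 0 n).filter (fun m => p ^ 2 ∣ m)).card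
          + (((Finset.Ioc 0 n).filter (fun m => p ^ 2 ∣ m)).image (· + 1)).card :=
          Finset.card_union_le _ _
      _ ≤ n / p ^ 2 + n / p ^ 2 := by
          rw [h1]
          exact Nat.add_le_add_left (le_trans Finset.card_image_le (le_of_eq h1)) _
      _ = 2 * (n / p ^ 2) := by ring
  have hTcard : ((Sz \ S).card : ℝ) ≤ 2 * n / z := by
    have hstep1 : (Sz \ S).card ≤ ∑ p ∈ PP, 2 * (n / p ^ 2) := by
      calc (Sz \ S).card ≤ (PP.biUnion bad).card := Finset.card_le_card hsubT
        _ ≤ ∑ p ∈ PP, (bad p).card := Finset.card_biUnion_le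
        _ ≤ ∑ p ∈ PP, 2 * (n / p ^ 2) := Finset.sum_le_sum hcardbad
    have hstep2 : ((∑ p ∈ PP, 2 * (n / p ^ 2) : ℕ) : ℝ)
        ≤ ∑ p ∈ Finset.Ioc z n, 2 * ((n : ℝ) * ((p : ℝ) ^ 2)⁻¹) := by
      push_cast
      apply le_trans (Finset.sum_le_sum_of_subset_of_nonneg (Finset.filter_subset _ _) ?_)
      · apply Finset.sum_le_sum
        intro p hp
        have hp0 : 0 < p := by
          simp only [Finset.mem_Ioc] at hp
          omega
        have : ((n / p ^ 2 : ℕ) : ℝ) ≤ (n : ℝ) / (p : ℝ) ^ 2 := by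
          have := Nat.cast_div_le (α := ℝ) (m := n) (n := p ^ 2)
          push_cast at this
          exact this
        rw [div_eq_mul_inv] at this
        linarith
      · intro p _ _
        positivity
    have hstep3 : ∑ p ∈ Finset.Ioc z n, 2 * ((n : ℝ) * ((p : ℝ) ^ 2)⁻¹)
        ≤ 2 * n / z := by
      rw [← Finset.mul_sum, ← Finset.mul_sum]
      rcases le_or_gt z n with hzn | hzn
      · have hsum := sum_Ioc_inv_sq_le_sub (α := ℝ) (k := z) (n := n) (by omega) hzn
        have hzr : (0:ℝ) < z := by exact_mod_cast hz
        have hnr : (0:ℝ) ≤ n := Nat.cast_nonneg n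
        have hinvn : (0:ℝ) ≤ (n:ℝ)⁻¹ := by positivity
        calc 2 * ((n:ℝ) * ∑ p ∈ Finset.Ioc z n, ((p : ℝ) ^ 2)⁻¹)
            ≤ 2 * ((n:ℝ) * ((z:ℝ)⁻¹ - (n:ℝ)⁻¹)) := by
              apply mul_le_mul_of_nonneg_left _ (by norm_num)
              exact mul_le_mul_of_nonneg_left hsum hnr
          _ ≤ 2 * ((n:ℝ) * (z:ℝ)⁻¹) := by nlinarith
          _ = 2 * n / z := by rw [div_eq_mul_inv, mul_assoc]
      · rw [Finset.Ioc_eq_empty (by omega)]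
        simp
        positivity
    calc ((Sz \ S).card : ℝ) ≤ ((∑ p ∈ PP, 2 * (n / p ^ 2) : ℕ) : ℝ) := by
          exact_mod_cast hstep1
      _ ≤ ∑ p ∈ Finset.Ioc z n, 2 * ((n : ℝ) * ((p : ℝ) ^ 2)⁻¹) := hstep2
      _ ≤ 2 * n / z := hstep3
  have : (Sz.card : ℝ) = (S.card : ℝ) + ((Sz \ S).card : ℝ) := by exact_mod_cast hcards
  linarith

theorem stmt_0 (ω0 ω1 : ℕ) (h0 : 2 ≤ ω0) (h1 : 2 ≤ ω1) :
    Multipliable (fun p : Nat.Primes =>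
      (1 : ℝ) - 1 / ((p : ℕ) : ℝ) ^ ω0 - 1 / ((p : ℕ) : ℝ) ^ ω1) ∧
    Tendsto (fun n : ℕ =>
        (((Finset.Icc 2 n).filter
          (fun M => normInf M < ω0 ∧ normInf (M - 1) < ω1)).card : ℝ) / n)
      atTop
      (nhds (∏' p : Nat.Primes,
        ((1 : ℝ) - 1 / ((p : ℕ) : ℝ) ^ ω0 - 1 / ((p : ℕ) : ℝ) ^ ω1))) := by
  refine ⟨multipliable_aux ω0 ω1 h0 h1, ?_⟩
  set L := ∏' p : Nat.Primes,
    ((1 : ℝ) - 1 / ((p : ℕ) : ℝ) ^ ω0 - 1 / ((p : ℕ) : ℝ) ^ ω1) with hL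
  rw [Metric.tendsto_atTop]
  intro ε hε
  have hD := tendsto_Dz ω0 ω1 h0 h1
  rw [Metric.tendsto_atTop] at hD
  obtain ⟨z₀, hz₀⟩ := hD (ε / 3) (by linarith)
  set z := max (max z₀ 1) (⌈(6 : ℝ) / ε⌉₊ + 1) with hzdef
  have hz1 : 1 ≤ z := le_trans (le_max_right z₀ 1) (le_max_left _ _)
  have hzz₀ : z₀ ≤ z := le_trans (le_max_left z₀ 1) (le_max_left _ _)
  have hzr : (0 : ℝ) < z := by exact_mod_cast hz1
  have hz6 : (6 : ℝ) / ε < z := by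
    have hc : (⌈(6 : ℝ) / ε⌉₊ + 1 : ℕ) ≤ z := le_max_right _ _
    have hc' : ((⌈(6 : ℝ) / ε⌉₊ + 1 : ℕ) : ℝ) ≤ z := by exact_mod_cast hc
    have h6 : (6 : ℝ) / ε ≤ ⌈(6 : ℝ) / ε⌉₊ := Nat.le_ceil _
    push_cast at hc'
    linarith
  have h2z : 2 / (z : ℝ) < ε / 3 := by
    rw [div_lt_iff₀ hzr]
    have h6z : 6 < ε * z := by
      have := (div_lt_iff₀ hε).mp hz6
      linarith
    linarith
  have hA := tendsto_Az ω0 ω1 (by omega) (by omega) z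
  rw [Metric.tendsto_atTop] at hA
  obtain ⟨N₁, hN₁⟩ := hA (ε / 3) (by linarith)
  refine ⟨max N₁ 1, fun n hn => ?_⟩
  have hnN₁ : N₁ ≤ n := le_trans (le_max_left _ _) hn
  have hn1 : 1 ≤ n := le_trans (le_max_right _ _) hn
  have hnr : (0 : ℝ) < n := by exact_mod_cast hn1
  obtain ⟨hS1, hS2⟩ := sandwich ω0 ω1 h0 h1 z n hz1
  set F : ℝ := (((Finset.Icc 2 n).filter
    (fun M => normInf M < ω0 ∧ normInf (M - 1) < ω1)).card : ℝ) with hF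
  set Az : ℝ := (((Finset.Icc 2 n).filter (cz ω0 ω1 z)).card : ℝ) with hAz
  have hdiff : |F / n - Az / n| ≤ 2 / z := by
    rw [abs_le]
    constructor
    · have e2 : 2 * (n:ℝ) / z * z = 2 * n := div_mul_cancel₀ _ (ne_of_gt hzr)
      have : Az / n ≤ F / n + 2 / z := by
        rw [div_add_div _ _ (ne_of_gt hnr) (ne_of_gt hzr),
          div_le_div_iff₀ hnr (mul_pos hnr hzr)]
        nlinarith [mul_le_mul_of_nonneg_right hS2 (mul_nonneg hnr.le hzr.le), e2, hnr.le, hzr.le]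
      linarith
    · have : F / n ≤ Az / n := div_le_div_of_nonneg_right hS1 hnr.le
      have h2zpos : (0:ℝ) ≤ 2 / z := by positivity
      linarith
  have hdA : dist (Az / n) (Dz ω0 ω1 z) < ε / 3 := hN₁ n hnN₁
  have hdD : dist (Dz ω0 ω1 z) L < ε / 3 := hz₀ z hzz₀
  calc dist (F / n) L ≤ dist (F / n) (Az / n) + dist (Az / n) (Dz ω0 ω1 z)
        + dist (Dz ω0 ω1 z) L := dist_triangle4 _ _ _ _
    _ ≤ 2 / z + dist (Az / n) (Dz ω0 ω1 z) + dist (Dz ω0 ω1 z) L := by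
        rw [Real.dist_eq]
        linarith [hdiff]
    _ < ε / 3 + ε / 3 + ε / 3 := by linarith
    _ = ε := by ring
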